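/- Let K : ℝ^d → ℝ be C¹, symmetric (K(x) = K(−x)), and satisfy ⟨∇K(x) − ∇K(y), x−y⟩ ≥ λ|x−y|² for all x,y. Let X₁, X₂ be random variables taking values in a bounded set D ⊂ ℝ^d with laws μ₁, μ₂ respectively. Then E[−⟨X₁ − X₂, (∇K∗μ₁)(X₁) − (∇K∗μ₂)(X₂)⟩] ≤ −min{0,λ} · E[|X₁ − X₂|²]. -/

import Mathlib

open RealInnerProductSpace MeasureTheory

private lemma integrable_of_bdd {α : Type*} [MeasurableSpace α] {μ : Measure α}
    [IsFiniteMeasure μ] {G : Type*} [NormedAddCommGroup G] {f : α → G}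
    (hm : AEStronglyMeasurable f μ) {C : ℝ} (h : ∀ x, ‖f x‖ ≤ C) : Integrable f μ :=
  ⟨hm, HasFiniteIntegral.of_bounded (ae_of_all _ h)⟩

set_option maxHeartbeats 2000000 in
/-- Lemma 3.3 (coupling estimate for λ-convex symmetric interaction potentials):
for random variables `X₁, X₂` with values in a bounded set `D` and laws `μ₁, μ₂`,
`E[-⟪X₁ - X₂, ∇K∗μ₁(X₁) - ∇K∗μ₂(X₂)⟫] ≤ -min 0 λ · E[‖X₁ - X₂‖²]`. -/
theorem interaction_convexity_coupling_estimate
    {d : ℕ} {D : Set (EuclideanSpace ℝ (Fin d))} (hDb : Bornology.IsBounded D)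
    (K : EuclideanSpace ℝ (Fin d) → ℝ) (hK : ContDiff ℝ 1 K)
    (hKsymm : ∀ x, K x = K (-x))
    (lam : ℝ)
    (hKconv : ∀ x y, ⟪gradient K x - gradient K y, x - y⟫ ≥ lam * ‖x - y‖ ^ 2)
    {Ω : Type*} [MeasurableSpace Ω] (ℙ : Measure Ω) [IsProbabilityMeasure ℙ]
    (X₁ X₂ : Ω → EuclideanSpace ℝ (Fin d))
    (hX₁m : Measurable X₁) (hX₂m : Measurable X₂)
    (hX₁D : ∀ ω, X₁ ω ∈ D) (hX₂D : ∀ ω, X₂ ω ∈ D)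
    (μ₁ μ₂ : Measure (EuclideanSpace ℝ (Fin d)))
    (hμ₁ : μ₁ = Measure.map X₁ ℙ) (hμ₂ : μ₂ = Measure.map X₂ ℙ) :
    ∫ ω, -⟪X₁ ω - X₂ ω,
        (∫ y, gradient K (X₁ ω - y) ∂μ₁) - (∫ y, gradient K (X₂ ω - y) ∂μ₂)⟫ ∂ℙ
      ≤ -(min 0 lam) * ∫ ω, ‖X₁ ω - X₂ ω‖ ^ 2 ∂ℙ := by
  classical

  have hKd : Differentiable ℝ K := hK.differentiable one_ne_zero
  -- continuity of the gradient
  have hFc : Continuous (gradient K) := by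
    show Continuous fun x => (InnerProductSpace.toDual ℝ (EuclideanSpace ℝ (Fin d))).symm (fderiv ℝ K x)
    exact (InnerProductSpace.toDual ℝ (EuclideanSpace ℝ (Fin d))).symm.continuous.comp (hK.continuous_fderiv one_ne_zero)
  -- antisymmetry of the gradient
  have hFodd : ∀ z : EuclideanSpace ℝ (Fin d), gradient K (-z) = - gradient K z := by
    intro z
    have h1 : HasFDerivAt (fun x : EuclideanSpace ℝ (Fin d) => K (-x))
        ((fderiv ℝ K (-z)).comp (-(ContinuousLinearMap.id ℝ (EuclideanSpace ℝ (Fin d))))) z :=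
      (hKd (-z)).hasFDerivAt.comp z ((hasFDerivAt_id z).neg)
    have hfn : (fun x : EuclideanSpace ℝ (Fin d) => K (-x)) = K := funext fun x => (hKsymm x).symm
    rw [hfn] at h1
    have h2 : fderiv ℝ K z = (fderiv ℝ K (-z)).comp (-(ContinuousLinearMap.id ℝ (EuclideanSpace ℝ (Fin d)))) :=
      h1.fderiv
    have h3 : fderiv ℝ K (-z) = -(fderiv ℝ K z) := by
      rw [h2]; ext v
      simp
    show (InnerProductSpace.toDual ℝ (EuclideanSpace ℝ (Fin d))).symm (fderiv ℝ K (-z))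
        = -(InnerProductSpace.toDual ℝ (EuclideanSpace ℝ (Fin d))).symm (fderiv ℝ K z)
    rw [h3, map_neg]
  -- bounds
  obtain ⟨R, hR⟩ := hDb.exists_norm_le
  set R₀ : ℝ := max R 0 with hR₀def
  have hR₀ : ∀ x ∈ D, ‖x‖ ≤ R₀ := fun x hx => le_trans (hR x hx) (le_max_left _ _)
  obtain ⟨C, hC⟩ : ∃ C, ∀ z ∈ Metric.closedBall (0 : EuclideanSpace ℝ (Fin d)) (2 * R₀), ‖gradient K z‖ ≤ C :=
    (isCompact_closedBall (0 : EuclideanSpace ℝ (Fin d)) (2 * R₀)).exists_bound_of_continuousOn hFc.continuousOn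
  set C₀ : ℝ := max C 0 with hC₀def
  have hC₀nonneg : 0 ≤ C₀ := le_max_right _ _
  have hCb : ∀ u v : EuclideanSpace ℝ (Fin d), ‖u‖ ≤ R₀ → ‖v‖ ≤ R₀ → ‖gradient K (u - v)‖ ≤ C₀ := by
    intro u v hu hv
    refine le_trans (hC _ ?_) (le_max_left _ _)
    rw [Metric.mem_closedBall, dist_zero_right]
    calc ‖u - v‖ ≤ ‖u‖ + ‖v‖ := norm_sub_le u v
      _ ≤ R₀ + R₀ := add_le_add hu hv
      _ = 2 * R₀ := by ring
  have hX₁n : ∀ ω, ‖X₁ ω‖ ≤ R₀ := fun ω => hR₀ _ (hX₁D ω)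
  have hX₂n : ∀ ω, ‖X₂ ω‖ ≤ R₀ := fun ω => hR₀ _ (hX₂D ω)
  -- the difference process
  set Z : Ω → EuclideanSpace ℝ (Fin d) := fun ω => X₁ ω - X₂ ω with hZdef
  have hZm : Measurable Z := hX₁m.sub hX₂m
  have hZb : ∀ ω, ‖Z ω‖ ≤ 2 * R₀ := by
    intro ω
    calc ‖X₁ ω - X₂ ω‖ ≤ ‖X₁ ω‖ + ‖X₂ ω‖ := norm_sub_le _ _
      _ ≤ R₀ + R₀ := add_le_add (hX₁n ω) (hX₂n ω)
      _ = 2 * R₀ := by ring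
  have hR₀nonneg : (0:ℝ) ≤ R₀ := le_max_right _ _
  -- the double-variable integrand
  set g : Ω → Ω → ℝ := fun ω ω' =>
    -⟪Z ω, gradient K (X₁ ω - X₁ ω') - gradient K (X₂ ω - X₂ ω')⟫ with hgdef
  have hFm : Measurable (gradient K) := hFc.measurable
  have h1m : Measurable fun p : Ω × Ω => gradient K (X₁ p.1 - X₁ p.2) :=
    hFm.comp ((hX₁m.comp measurable_fst).sub (hX₁m.comp measurable_snd))
  have h2m : Measurable fun p : Ω × Ω => gradient K (X₂ p.1 - X₂ p.2) :=
    hFm.comp ((hX₂m.comp measurable_fst).sub (hX₂m.comp measurable_snd))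
  have hgm : Measurable fun p : Ω × Ω => g p.1 p.2 :=
    (((hZm.comp measurable_fst).inner (h1m.sub h2m))).neg
  have hgbound : ∀ p : Ω × Ω, ‖g p.1 p.2‖ ≤ 2 * R₀ * (C₀ + C₀) := by
    intro p
    rw [hgdef, norm_neg]
    calc ‖(⟪Z p.1, gradient K (X₁ p.1 - X₁ p.2) - gradient K (X₂ p.1 - X₂ p.2)⟫ : ℝ)‖
        ≤ ‖Z p.1‖ * ‖gradient K (X₁ p.1 - X₁ p.2) - gradient K (X₂ p.1 - X₂ p.2)‖ :=
          norm_inner_le_norm _ _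
      _ ≤ (2 * R₀) * (C₀ + C₀) := by
          refine mul_le_mul (hZb _) ?_ (norm_nonneg _) (by positivity)
          calc ‖gradient K (X₁ p.1 - X₁ p.2) - gradient K (X₂ p.1 - X₂ p.2)‖
              ≤ ‖gradient K (X₁ p.1 - X₁ p.2)‖ + ‖gradient K (X₂ p.1 - X₂ p.2)‖ :=
                norm_sub_le _ _
            _ ≤ C₀ + C₀ := add_le_add (hCb _ _ (hX₁n _) (hX₁n _)) (hCb _ _ (hX₂n _) (hX₂n _))
  have hgInt : Integrable (fun p : Ω × Ω => g p.1 p.2) (ℙ.prod ℙ) :=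
    integrable_of_bdd hgm.aestronglyMeasurable hgbound
  have hgswapm : Measurable fun p : Ω × Ω => g p.2 p.1 :=
    hgm.comp (f := Prod.swap) measurable_swap
  have hgswapInt : Integrable (fun p : Ω × Ω => g p.2 p.1) (ℙ.prod ℙ) :=
    integrable_of_bdd hgswapm.aestronglyMeasurable fun p => hgbound p.swap
  -- rewrite the LHS as a double integral
  have hmap₁ : ∀ ω, (∫ y, gradient K (X₁ ω - y) ∂μ₁) = ∫ ω', gradient K (X₁ ω - X₁ ω') ∂ℙ := by
    intro ω; rw [hμ₁]
    exact integral_map hX₁m.aemeasurable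
      ((hFc.comp (continuous_const.sub continuous_id)).aestronglyMeasurable)
  have hmap₂ : ∀ ω, (∫ y, gradient K (X₂ ω - y) ∂μ₂) = ∫ ω', gradient K (X₂ ω - X₂ ω') ∂ℙ := by
    intro ω; rw [hμ₂]
    exact integral_map hX₂m.aemeasurable
      ((hFc.comp (continuous_const.sub continuous_id)).aestronglyMeasurable)
  have int1 : ∀ ω, Integrable (fun ω' => gradient K (X₁ ω - X₁ ω')) ℙ := fun ω =>
    integrable_of_bdd (((hFc.comp (continuous_const.sub continuous_id)).measurable.comp
      hX₁m).aestronglyMeasurable) (fun ω' => hCb _ _ (hX₁n ω) (hX₁n ω'))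
  have int2 : ∀ ω, Integrable (fun ω' => gradient K (X₂ ω - X₂ ω')) ℙ := fun ω =>
    integrable_of_bdd (((hFc.comp (continuous_const.sub continuous_id)).measurable.comp
      hX₂m).aestronglyMeasurable) (fun ω' => hCb _ _ (hX₂n ω) (hX₂n ω'))
  have hL : (∫ ω, -⟪X₁ ω - X₂ ω,
        (∫ y, gradient K (X₁ ω - y) ∂μ₁) - (∫ y, gradient K (X₂ ω - y) ∂μ₂)⟫ ∂ℙ)
      = ∫ p : Ω × Ω, g p.1 p.2 ∂(ℙ.prod ℙ) := by
    rw [← MeasureTheory.integral_integral (f := g) hgInt]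
    refine integral_congr_ae (Filter.Eventually.of_forall fun ω => ?_)
    dsimp only
    have i12 : Integrable
        (fun ω' => gradient K (X₁ ω - X₁ ω') - gradient K (X₂ ω - X₂ ω')) ℙ :=
      (int1 ω).sub (int2 ω)
    rw [hmap₁ ω, hmap₂ ω, ← integral_sub (int1 ω) (int2 ω),
      ← integral_inner i12 (X₁ ω - X₂ ω), ← integral_neg]
  -- symmetrization
  have hswap : ∫ p : Ω × Ω, g p.1 p.2 ∂(ℙ.prod ℙ) = ∫ p : Ω × Ω, g p.2 p.1 ∂(ℙ.prod ℙ) := by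
    have h := MeasureTheory.integral_prod_swap (μ := ℙ) (ν := ℙ)
      (fun p : Ω × Ω => g p.2 p.1)
    simpa using h
  have h2I : ∫ p : Ω × Ω, g p.1 p.2 ∂(ℙ.prod ℙ)
      = (1/2) * ∫ p : Ω × Ω, (g p.1 p.2 + g p.2 p.1) ∂(ℙ.prod ℙ) := by
    rw [integral_add hgInt hgswapInt, ← hswap]; ring
  -- the pointwise convexity estimate
  have hkey : ∀ ω ω', g ω ω' + g ω' ω ≤ -(lam * ‖Z ω - Z ω'‖ ^ 2) := by
    intro ω ω'
    have e1 : X₁ ω' - X₁ ω = -(X₁ ω - X₁ ω') := by abel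
    have e2 : X₂ ω' - X₂ ω = -(X₂ ω - X₂ ω') := by abel
    have hab : (X₁ ω - X₁ ω') - (X₂ ω - X₂ ω') = Z ω - Z ω' := by
      simp only [hZdef]; abel
    have h1 : g ω ω' = -⟪Z ω, gradient K (X₁ ω - X₁ ω') - gradient K (X₂ ω - X₂ ω')⟫ := by
      simp only [hgdef]
    have h2 : g ω' ω = ⟪Z ω', gradient K (X₁ ω - X₁ ω') - gradient K (X₂ ω - X₂ ω')⟫ := by
      simp only [hgdef]
      rw [e1, e2, hFodd, hFodd,
        show -gradient K (X₁ ω - X₁ ω') - -gradient K (X₂ ω - X₂ ω')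
          = -(gradient K (X₁ ω - X₁ ω') - gradient K (X₂ ω - X₂ ω')) by abel,
        inner_neg_right, neg_neg]
    have hsum : g ω ω' + g ω' ω
        = -⟪Z ω - Z ω', gradient K (X₁ ω - X₁ ω') - gradient K (X₂ ω - X₂ ω')⟫ := by
      rw [h1, h2]
      simp only [hZdef, inner_sub_left]
      ring
    have hfin := hKconv (X₁ ω - X₁ ω') (X₂ ω - X₂ ω')
    rw [hab] at hfin
    rw [hsum, real_inner_comm]
    linarith
  -- integrate the pointwise estimate
  have hqm : Measurable fun p : Ω × Ω => ‖Z p.1 - Z p.2‖ ^ 2 :=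
    (((hZm.comp measurable_fst).sub (hZm.comp measurable_snd)).norm).pow_const 2
  have hqb : ∀ p : Ω × Ω, ‖‖Z p.1 - Z p.2‖ ^ 2‖ ≤ (4 * R₀) ^ 2 := by
    intro p
    rw [Real.norm_eq_abs, abs_of_nonneg (by positivity)]
    have h1 : ‖Z p.1 - Z p.2‖ ≤ 4 * R₀ := by
      calc ‖Z p.1 - Z p.2‖ ≤ ‖Z p.1‖ + ‖Z p.2‖ := norm_sub_le _ _
        _ ≤ 2 * R₀ + 2 * R₀ := add_le_add (hZb _) (hZb _)
        _ = 4 * R₀ := by ring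
    exact pow_le_pow_left₀ (norm_nonneg _) h1 2
  have hqInt : Integrable (fun p : Ω × Ω => ‖Z p.1 - Z p.2‖ ^ 2) (ℙ.prod ℙ) :=
    integrable_of_bdd hqm.aestronglyMeasurable hqb
  have hmono : ∫ p : Ω × Ω, (g p.1 p.2 + g p.2 p.1) ∂(ℙ.prod ℙ)
      ≤ ∫ p : Ω × Ω, -(lam * ‖Z p.1 - Z p.2‖ ^ 2) ∂(ℙ.prod ℙ) :=
    integral_mono (hgInt.add hgswapInt) ((hqInt.const_mul lam).neg)
      (fun p => hkey p.1 p.2)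
  -- compute the double integral of ‖Z ω - Z ω'‖²
  have hZInt : Integrable Z ℙ := integrable_of_bdd hZm.aestronglyMeasurable hZb
  have hZsqInt : Integrable (fun ω => ‖Z ω‖ ^ 2) ℙ :=
    integrable_of_bdd ((hZm.norm).pow_const 2).aestronglyMeasurable
      (fun ω => by
        rw [Real.norm_eq_abs, abs_of_nonneg (by positivity)]
        exact pow_le_pow_left₀ (norm_nonneg _) (hZb ω) 2)
  have hA : Integrable (fun p : Ω × Ω => ‖Z p.1‖ ^ 2) (ℙ.prod ℙ) :=
    integrable_of_bdd (((hZm.comp measurable_fst).norm).pow_const 2).aestronglyMeasurable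
      (fun p => by
        rw [Real.norm_eq_abs, abs_of_nonneg (by positivity)]
        exact pow_le_pow_left₀ (norm_nonneg _) (hZb p.1) 2)
  have hB : Integrable (fun p : Ω × Ω => (⟪Z p.1, Z p.2⟫ : ℝ)) (ℙ.prod ℙ) :=
    integrable_of_bdd
      ((hZm.comp measurable_fst).inner (hZm.comp measurable_snd)).aestronglyMeasurable
      (fun p => by
        calc ‖(⟪Z p.1, Z p.2⟫ : ℝ)‖ ≤ ‖Z p.1‖ * ‖Z p.2‖ := norm_inner_le_norm _ _
          _ ≤ (2 * R₀) * (2 * R₀) :=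
            mul_le_mul (hZb _) (hZb _) (norm_nonneg _) (by positivity))
  have hA' : Integrable (fun p : Ω × Ω => ‖Z p.2‖ ^ 2) (ℙ.prod ℙ) :=
    integrable_of_bdd (((hZm.comp measurable_snd).norm).pow_const 2).aestronglyMeasurable
      (fun p => by
        rw [Real.norm_eq_abs, abs_of_nonneg (by positivity)]
        exact pow_le_pow_left₀ (norm_nonneg _) (hZb p.2) 2)
  have hfst : ∫ p : Ω × Ω, ‖Z p.1‖ ^ 2 ∂(ℙ.prod ℙ) = ∫ ω, ‖Z ω‖ ^ 2 ∂ℙ := by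
    rw [← MeasureTheory.integral_integral (f := fun ω _ω' : Ω => ‖Z ω‖ ^ 2) hA]
    simp
  have hsnd : ∫ p : Ω × Ω, ‖Z p.2‖ ^ 2 ∂(ℙ.prod ℙ) = ∫ ω, ‖Z ω‖ ^ 2 ∂ℙ := by
    rw [← MeasureTheory.integral_integral (f := fun _ω ω' : Ω => ‖Z ω'‖ ^ 2) hA']
    simp
  have hinner : ∫ p : Ω × Ω, (⟪Z p.1, Z p.2⟫ : ℝ) ∂(ℙ.prod ℙ) = ‖∫ ω, Z ω ∂ℙ‖ ^ 2 := by
    rw [← MeasureTheory.integral_integral (f := fun ω ω' : Ω => (⟪Z ω, Z ω'⟫ : ℝ)) hB]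
    have h1 : ∀ ω, (∫ ω', (⟪Z ω, Z ω'⟫ : ℝ) ∂ℙ) = ⟪Z ω, ∫ ω', Z ω' ∂ℙ⟫ := fun ω =>
      integral_inner hZInt (Z ω)
    simp_rw [h1]
    have h2 : ∀ ω, (⟪Z ω, ∫ ω', Z ω' ∂ℙ⟫ : ℝ) = ⟪(∫ ω', Z ω' ∂ℙ), Z ω⟫ := fun ω =>
      real_inner_comm _ _
    simp_rw [h2]
    rw [integral_inner hZInt (∫ ω', Z ω' ∂ℙ), real_inner_self_eq_norm_sq]
  have hD : ∫ p : Ω × Ω, ‖Z p.1 - Z p.2‖ ^ 2 ∂(ℙ.prod ℙ)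
      = 2 * (∫ ω, ‖Z ω‖ ^ 2 ∂ℙ) - 2 * ‖∫ ω, Z ω ∂ℙ‖ ^ 2 := by
    have hexp : (fun p : Ω × Ω => ‖Z p.1 - Z p.2‖ ^ 2)
        = fun p : Ω × Ω => ‖Z p.1‖ ^ 2 - 2 * ⟪Z p.1, Z p.2⟫ + ‖Z p.2‖ ^ 2 :=
      funext fun p => norm_sub_sq_real _ _
    have hB2 : Integrable (fun p : Ω × Ω => 2 * (⟪Z p.1, Z p.2⟫ : ℝ)) (ℙ.prod ℙ) :=
      hB.const_mul 2
    have hAB : Integrable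
        (fun p : Ω × Ω => ‖Z p.1‖ ^ 2 - 2 * (⟪Z p.1, Z p.2⟫ : ℝ)) (ℙ.prod ℙ) := hA.sub hB2
    rw [hexp, integral_add hAB hA', integral_sub hA hB2,
      integral_const_mul, hfst, hsnd, hinner]
    ring
  -- abbreviations for the final bound
  set S : ℝ := ∫ ω, ‖Z ω‖ ^ 2 ∂ℙ with hSdef
  set V : ℝ := ‖∫ ω, Z ω ∂ℙ‖ ^ 2 with hVdef
  have hVnonneg : 0 ≤ V := by positivity
  have hSV : V ≤ S := by
    have h0 : 0 ≤ ∫ p : Ω × Ω, ‖Z p.1 - Z p.2‖ ^ 2 ∂(ℙ.prod ℙ) :=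
      integral_nonneg fun p => by positivity
    rw [hD] at h0; linarith
  -- conclude
  calc ∫ ω, -⟪X₁ ω - X₂ ω,
        (∫ y, gradient K (X₁ ω - y) ∂μ₁) - (∫ y, gradient K (X₂ ω - y) ∂μ₂)⟫ ∂ℙ
      = (1/2) * ∫ p : Ω × Ω, (g p.1 p.2 + g p.2 p.1) ∂(ℙ.prod ℙ) := by rw [hL, h2I]
    _ ≤ (1/2) * ∫ p : Ω × Ω, -(lam * ‖Z p.1 - Z p.2‖ ^ 2) ∂(ℙ.prod ℙ) := by linarith [hmono]
    _ = (1/2) * (-(lam * (2 * S - 2 * V))) := by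
        rw [integral_neg, integral_const_mul, hD]
    _ ≤ -(min 0 lam) * S := by
        rcases le_or_gt 0 lam with hlam | hlam
        · rw [min_eq_left hlam]
          nlinarith
        · rw [min_eq_right hlam.le]
          nlinarith
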